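/- Let K ⊊ L be finite fields and m ≤ |K|. Then every K-linear Hamming isometry f : C → L^m of a K-linear code C ⊆ L^m extends to a K-monomial map of L^m. -/

import Mathlib

open Module

/-- A nontrivial vector space over a finite field `K` cannot be covered by at most
`|K|` proper subspaces. -/
private theorem cover_lemma {K V : Type*} [Field K] [Fintype K] [AddCommGroup V] [Module K V]
    [Nontrivial V] (t : Multiset (Submodule K V)) (hc : Multiset.card t ≤ Fintype.card K)
    (hp : ∀ W ∈ t, W ≠ ⊤) : ∃ x : V, ∀ W ∈ t, x ∉ W := by
  induction t using Multiset.strongInductionOn with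
  | ih t ih =>
  rcases eq_or_ne t 0 with rfl | hne
  · exact ⟨0, by simp⟩
  obtain ⟨U₁, hU₁⟩ := Multiset.exists_mem_of_ne_zero hne
  obtain ⟨t', rfl⟩ := Multiset.exists_cons_of_mem hU₁
  by_contra hcov
  push_neg at hcov
  by_cases hA : ∀ u : V, u ∈ U₁ → ∃ W ∈ t', u ∈ W
  · obtain ⟨x, hx⟩ := ih t' (Multiset.lt_cons_self _ _)
      (le_trans (by simp) hc) (fun W hW => hp W (Multiset.mem_cons_of_mem hW))
    obtain ⟨W, hW, hxW⟩ := hcov x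
    rcases Multiset.mem_cons.mp hW with rfl | hW'
    · obtain ⟨W', hW', h'⟩ := hA x hxW
      exact hx W' hW' h'
    · exact hx W hW' hxW
  · push_neg at hA
    obtain ⟨u, hu, hu'⟩ := hA
    have hU₁top := hp U₁ (Multiset.mem_cons_self _ _)
    obtain ⟨v, hv⟩ : ∃ v, v ∉ U₁ := by
      by_contra h; push_neg at h; exact hU₁top (Submodule.eq_top_iff'.mpr h)
    classical
    set l := t'.toList with hl
    have hmem : ∀ c : K, ∃ i : Fin l.length, (if c = 0 then v else u + c • v) ∈ l.get i := by
      intro c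
      obtain ⟨W, hW, hxW⟩ := hcov (if c = 0 then v else u + c • v)
      have hWt' : W ∈ t' := by
        rcases Multiset.mem_cons.mp hW with rfl | h
        · exfalso
          by_cases hc0 : c = 0
          · simp only [hc0, if_true] at hxW; exact hv hxW
          · simp only [hc0, if_false] at hxW
            have h1 : c • v ∈ W := (W.add_mem_iff_right hu).mp hxW
            have h2 : v ∈ W := by
              have := W.smul_mem c⁻¹ h1
              rwa [inv_smul_smul₀ hc0] at this
            exact hv h2
        · exact h
      have hWl : W ∈ l := by rw [hl]; exact Multiset.mem_toList.mpr hWt'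
      obtain ⟨i, hi⟩ := List.mem_iff_get.mp hWl
      exact ⟨i, hi ▸ hxW⟩
    choose F hF using hmem
    have huW : ∀ i : Fin l.length, u ∉ l.get i := by
      intro i
      exact hu' _ (Multiset.mem_toList.mp (l.get_mem i))
    have key : ∀ (c : K), c ≠ 0 → ∀ i : Fin l.length,
        v ∈ l.get i → u + c • v ∈ l.get i → False := by
      intro c hc0 i hvW hucvW
      have : u ∈ l.get i := by
        have := (l.get i).sub_mem hucvW ((l.get i).smul_mem c hvW)
        simpa using this
      exact huW i this
    have hinj : Function.Injective F := by
      intro c₁ c₂ hEq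
      by_contra hnec
      set W := l.get (F c₁) with hWdef
      have h1 : (if c₁ = 0 then v else u + c₁ • v) ∈ W := hF c₁
      have h2 : (if c₂ = 0 then v else u + c₂ • v) ∈ W := by
        rw [hWdef, hEq]; exact hF c₂
      by_cases h01 : c₁ = 0 <;> by_cases h02 : c₂ = 0
      · exact hnec (h01.trans h02.symm)
      · simp only [h01, if_true] at h1
        simp only [h02, if_false] at h2
        exact key c₂ h02 (F c₁) h1 h2
      · simp only [h01, if_false] at h1
        simp only [h02, if_true] at h2
        exact key c₁ h01 (F c₁) h2 h1
      · simp only [h01, if_false] at h1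
        simp only [h02, if_false] at h2
        have hvW : v ∈ W := by
          have hsub : (c₁ - c₂) • v ∈ W := by
            have := W.sub_mem h1 h2
            simpa [smul_sub, sub_smul] using this
          have hc12 : c₁ - c₂ ≠ 0 := sub_ne_zero.mpr hnec
          have := W.smul_mem (c₁ - c₂)⁻¹ hsub
          rwa [inv_smul_smul₀ hc12] at this
        exact key c₁ h01 (F c₁) hvW h1
    have hcard := Fintype.card_le_of_injective F hinj
    rw [Fintype.card_fin] at hcard
    have hlen : l.length = Multiset.card t' := Multiset.length_toList t'
    have hct : Multiset.card (U₁ ::ₘ t') = Multiset.card t' + 1 := Multiset.card_cons _ _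
    omega

/-- If `U` is maximal among the subspaces in `s + t`, belongs to `s`, and the weighted
indicator identity holds with `|t| ≤ |K|`, then `U ∈ t`. -/
private theorem mem_of_max {K V : Type*} [Field K] [Fintype K] [AddCommGroup V] [Module K V]
    [∀ (v : V) (W : Submodule K V), Decidable (v ∈ W)]
    (s t : Multiset (Submodule K V)) (ht : Multiset.card t ≤ Fintype.card K)
    (h : ∀ v : V, s.countP (fun W => v ∈ W) = t.countP (fun W => v ∈ W))
    {U : Submodule K V} (hU : U ∈ s) (hmax : ∀ W ∈ t, ¬ U < W) : U ∈ t := by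
  by_contra hUt
  by_cases hbot : U = ⊥
  · have ht0 : t = 0 := by
      apply Multiset.eq_zero_of_forall_notMem
      intro W hW
      rcases eq_or_ne W ⊥ with rfl | hWne
      · exact hUt (hbot ▸ hW)
      · exact hmax W hW (hbot ▸ bot_lt_iff_ne_bot.mpr hWne)
    have h0 := h 0
    rw [ht0] at h0
    simp only [Multiset.countP_zero] at h0
    have : 0 < Multiset.countP (fun W => (0 : V) ∈ W) s :=
      Multiset.countP_pos.mpr ⟨U, hU, U.zero_mem⟩
    omega
  · haveI : Nontrivial ↥U := Submodule.nontrivial_iff_ne_bot.mpr hbot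
    obtain ⟨x, hx⟩ := cover_lemma (t.map (Submodule.comap U.subtype))
      (by rwa [Multiset.card_map])
      (by
        intro W' hW'
        obtain ⟨W, hW, rfl⟩ := Multiset.mem_map.mp hW'
        intro htop
        have hle : U ≤ W := Submodule.comap_subtype_eq_top.mp htop
        rcases lt_or_eq_of_le hle with hlt | heq
        · exact hmax W hW hlt
        · exact hUt (heq ▸ hW))
    have hxt : ∀ W ∈ t, (x : V) ∉ W := by
      intro W hW hxW
      exact hx (Submodule.comap U.subtype W) (Multiset.mem_map_of_mem _ hW) hxW
    have h1 : Multiset.countP (fun W => (x : V) ∈ W) t = 0 :=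
      Multiset.countP_eq_zero.mpr hxt
    have h2 : 0 < Multiset.countP (fun W => (x : V) ∈ W) s :=
      Multiset.countP_pos.mpr ⟨U, hU, x.2⟩
    have := h (x : V)
    omega

/-- Two multisets of subspaces, each of size at most `|K|`, with equal pointwise membership
counts, are equal. -/
private theorem multiset_eq {K V : Type*} [Field K] [Fintype K] [AddCommGroup V] [Module K V]
    [∀ (v : V) (W : Submodule K V), Decidable (v ∈ W)] [DecidableEq (Submodule K V)]
    (s t : Multiset (Submodule K V))
    (hs : Multiset.card s ≤ Fintype.card K) (ht : Multiset.card t ≤ Fintype.card K)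
    (h : ∀ v : V, s.countP (fun W => v ∈ W) = t.countP (fun W => v ∈ W)) : s = t := by
  induction s using Multiset.strongInductionOn generalizing t with
  | ih s ih =>
  rcases eq_or_ne s 0 with rfl | hne
  · by_contra hne'
    obtain ⟨W, hW⟩ := Multiset.exists_mem_of_ne_zero (Ne.symm hne')
    have h0 := h 0
    simp only [Multiset.countP_zero] at h0
    have : 0 < Multiset.countP (fun W => (0 : V) ∈ W) t :=
      Multiset.countP_pos.mpr ⟨W, hW, W.zero_mem⟩
    omega
  · obtain ⟨a, ha⟩ := Multiset.exists_mem_of_ne_zero hne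
    have hnonempty : (s + t).toFinset.Nonempty :=
      ⟨a, Multiset.mem_toFinset.mpr (Multiset.mem_add.mpr (Or.inl ha))⟩
    obtain ⟨U, hUmem, hmax⟩ : ∃ U ∈ (s + t).toFinset, ∀ W ∈ (s + t).toFinset, ¬ U < W := by
      obtain ⟨U, hU⟩ := Finset.exists_maximal hnonempty
      exact ⟨U, hU.prop, fun W hW hlt => lt_irrefl _ (lt_of_lt_of_le hlt (hU.2 hW hlt.le))⟩
    have hmax' : ∀ W ∈ s + t, ¬ U < W := fun W hW =>
      hmax W (Multiset.mem_toFinset.mpr hW)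
    have hmaxs : ∀ W ∈ s, ¬ U < W := fun W hW =>
      hmax' W (Multiset.mem_add.mpr (Or.inl hW))
    have hmaxt : ∀ W ∈ t, ¬ U < W := fun W hW =>
      hmax' W (Multiset.mem_add.mpr (Or.inr hW))
    have hUst : U ∈ s ∧ U ∈ t := by
      rcases Multiset.mem_add.mp (Multiset.mem_toFinset.mp hUmem) with hUs | hUt
      · exact ⟨hUs, mem_of_max s t ht h hUs hmaxt⟩
      · exact ⟨mem_of_max t s hs (fun v => (h v).symm) hUt hmaxs, hUt⟩
    obtain ⟨hUs, hUt⟩ := hUst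
    have h' : ∀ v : V, (s.erase U).countP (fun W => v ∈ W)
        = (t.erase U).countP (fun W => v ∈ W) := by
      intro v
      have hv := h v
      rw [← Multiset.cons_erase hUs, ← Multiset.cons_erase hUt,
        Multiset.countP_cons, Multiset.countP_cons] at hv
      omega
    have hcards : Multiset.card (s.erase U) ≤ Fintype.card K := by
      rw [Multiset.card_erase_of_mem hUs]; exact le_trans (Nat.pred_le _) hs
    have hcardt : Multiset.card (t.erase U) ≤ Fintype.card K := by
      rw [Multiset.card_erase_of_mem hUt]; exact le_trans (Nat.pred_le _) ht
    have heq := ih (s.erase U) (Multiset.erase_lt.mpr hUs) (t.erase U) hcards hcardt h'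
    rw [← Multiset.cons_erase hUs, ← Multiset.cons_erase hUt, heq]

/-- From equal fiber cardinalities, produce a permutation matching up two tuples. -/
private theorem exists_perm {α : Type*} {m : ℕ} (a b : Fin m → α)
    (h : ∀ y : α, Nat.card {i // a i = y} = Nat.card {i // b i = y}) :
    ∃ π : Equiv.Perm (Fin m), ∀ i, a (π i) = b i := by
  have e : ∀ y : α, {i // b i = y} ≃ {i // a i = y} := fun y =>
    Classical.choice (Finite.card_eq.mp (h y).symm)
  refine ⟨(Equiv.sigmaFiberEquiv b).symm.trans
    ((Equiv.sigmaCongrRight e).trans (Equiv.sigmaFiberEquiv a)), fun i => ?_⟩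
  simp only [Equiv.trans_apply]
  have h1 : (Equiv.sigmaFiberEquiv b).symm i = ⟨b i, ⟨i, rfl⟩⟩ := rfl
  rw [h1]
  have h2 : (Equiv.sigmaCongrRight e) ⟨b i, ⟨i, rfl⟩⟩ = ⟨b i, e (b i) ⟨i, rfl⟩⟩ := rfl
  rw [h2]
  exact (e (b i) ⟨i, rfl⟩).2

/-- A linear equivalence between two subspaces of a finite-dimensional space extends
to a linear automorphism of the whole space. -/
private theorem exists_equiv_extend {K W : Type*} [Field K] [AddCommGroup W] [Module K W]
    [FiniteDimensional K W] {p q : Submodule K W} (e : p ≃ₗ[K] q) :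
    ∃ g : W ≃ₗ[K] W, ∀ x : p, g (x : W) = ((e x : q) : W) := by
  obtain ⟨p', hp'⟩ := Submodule.exists_isCompl p
  obtain ⟨q', hq'⟩ := Submodule.exists_isCompl q
  have hr : finrank K p' = finrank K q' := by
    have h1 := Submodule.finrank_add_eq_of_isCompl hp'
    have h2 := Submodule.finrank_add_eq_of_isCompl hq'
    have h3 := e.finrank_eq
    omega
  let e' := LinearEquiv.ofFinrankEq (↥p') (↥q') hr
  refine ⟨(p.prodEquivOfIsCompl p' hp').symm.trans
    ((e.prodCongr e').trans (q.prodEquivOfIsCompl q' hq')), fun x => ?_⟩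
  have h0 : (p.prodEquivOfIsCompl p' hp').symm (x : W) = (x, 0) := by
    rw [LinearEquiv.symm_apply_eq]
    show (x : W) = p.subtype.coprod p'.subtype (x, 0)
    simp
  simp only [LinearEquiv.trans_apply, h0, LinearEquiv.prodCongr_apply]
  show ((q.prodEquivOfIsCompl q' hq') (e x, e' 0) : W) = _
  rw [map_zero]
  show q.subtype.coprod q'.subtype (e x, 0) = _
  simp

/-- Two linear maps with equal kernels into a finite-dimensional space differ by an
automorphism of the target. -/
private theorem factor {K V W : Type*} [Field K] [AddCommGroup V] [Module K V]
    [AddCommGroup W] [Module K W] [FiniteDimensional K W]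
    (lam mu : V →ₗ[K] W) (hker : LinearMap.ker lam = LinearMap.ker mu) :
    ∃ g : W ≃ₗ[K] W, ∀ v : V, mu v = g (lam v) := by
  let e0 : (LinearMap.range lam) ≃ₗ[K] (LinearMap.range mu) :=
    (lam.quotKerEquivRange).symm.trans
      (((LinearMap.ker lam).quotEquivOfEq (LinearMap.ker mu) hker).trans
        mu.quotKerEquivRange)
  have he0 : ∀ v : V, ((e0 ⟨lam v, LinearMap.mem_range_self lam v⟩ : LinearMap.range mu) : W)
      = mu v := by
    intro v
    have h1 : (lam.quotKerEquivRange).symm ⟨lam v, LinearMap.mem_range_self lam v⟩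
        = Submodule.Quotient.mk v := by
      rw [LinearEquiv.symm_apply_eq]
      exact Subtype.ext (lam.quotKerEquivRange_apply_mk v).symm
    simp only [e0, LinearEquiv.trans_apply, h1, Submodule.quotEquivOfEq_mk]
    exact mu.quotKerEquivRange_apply_mk v
  obtain ⟨g, hg⟩ := exists_equiv_extend e0
  refine ⟨g, fun v => ?_⟩
  have := hg ⟨lam v, LinearMap.mem_range_self lam v⟩
  rw [this, he0]

theorem stmt_18 (K L : Type*) [Field K] [Fintype K] [Field L] [Fintype L]
    [Algebra K L] [DecidableEq L]
    (hKL : ∃ ω : L, ω ∉ Set.range (algebraMap K L))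
    (m : ℕ) (hm : m ≤ Fintype.card K)
    (C : Submodule K (Fin m → L)) (f : C →ₗ[K] (Fin m → L))
    (hf : ∀ c : C, hammingNorm (f c) = hammingNorm (c : Fin m → L)) :
    ∃ (π : Equiv.Perm (Fin m)) (g : Fin m → (L ≃ₗ[K] L)),
      ∀ (c : C) (i : Fin m), f c i = g i ((c : Fin m → L) (π i)) := by
  classical
  have : FiniteDimensional K L := inferInstance
  set lam : Fin m → (C →ₗ[K] L) := fun i => (LinearMap.proj i).comp C.subtype with hlam
  set mu : Fin m → (C →ₗ[K] L) := fun i => (LinearMap.proj i).comp f with hmu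
  -- zero-coordinate counts agree
  have hzero : ∀ c : C, (Finset.univ.filter fun i => lam i c = 0).card
      = (Finset.univ.filter fun i => mu i c = 0).card := by
    intro c
    have h1 := Finset.card_filter_add_card_filter_not
      (s := Finset.univ) (fun i : Fin m => (c : Fin m → L) i ≠ 0)
    have h2 := Finset.card_filter_add_card_filter_not
      (s := Finset.univ) (fun i : Fin m => f c i ≠ 0)
    have hfc := hf c
    unfold hammingNorm at hfc
    have hl : (Finset.univ.filter fun i => lam i c = 0)
        = (Finset.univ.filter fun i => ¬ (c : Fin m → L) i ≠ 0) := by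
      apply Finset.filter_congr; intro i _; simp [hlam]
    have hmu' : (Finset.univ.filter fun i => mu i c = 0)
        = (Finset.univ.filter fun i => ¬ f c i ≠ 0) := by
      apply Finset.filter_congr; intro i _; simp [hmu]
    rw [hl, hmu']
    omega
  -- equal multisets of kernels
  have hst : Multiset.map (fun i => LinearMap.ker (lam i)) Finset.univ.val
      = Multiset.map (fun i => LinearMap.ker (mu i)) Finset.univ.val := by
    apply multiset_eq
    · rw [Multiset.card_map]; simpa using hm
    · rw [Multiset.card_map]; simpa using hm
    · intro c
      rw [Multiset.countP_map, Multiset.countP_map]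
      have hl : ∀ i : Fin m, (c ∈ LinearMap.ker (lam i)) ↔ lam i c = 0 := by
        intro i; exact LinearMap.mem_ker
      have hm' : ∀ i : Fin m, (c ∈ LinearMap.ker (mu i)) ↔ mu i c = 0 := by
        intro i; exact LinearMap.mem_ker
      have e1 : Multiset.filter (fun i => c ∈ LinearMap.ker (lam i)) Finset.univ.val
          = Multiset.filter (fun i => lam i c = 0) Finset.univ.val := by
        apply Multiset.filter_congr; intro i _; simp [LinearMap.mem_ker]
      have e2 : Multiset.filter (fun i => c ∈ LinearMap.ker (mu i)) Finset.univ.val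
          = Multiset.filter (fun i => mu i c = 0) Finset.univ.val := by
        apply Multiset.filter_congr; intro i _; simp [LinearMap.mem_ker]
      rw [e1, e2]
      have := hzero c
      simpa [Finset.card, Finset.filter] using this
  -- fiber counts agree
  have hcount : ∀ U : Submodule K C, Nat.card {i // LinearMap.ker (lam i) = U}
      = Nat.card {i // LinearMap.ker (mu i) = U} := by
    intro U
    have hc := congrArg (Multiset.count U) hst
    rw [Multiset.count_map, Multiset.count_map] at hc
    have e1 : Nat.card {i // LinearMap.ker (lam i) = U}
        = Multiset.card (Multiset.filter (fun i => U = LinearMap.ker (lam i))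
            Finset.univ.val) := by
      rw [Nat.card_eq_fintype_card, Fintype.card_subtype]
      simp only [Finset.card, Finset.filter]
      congr 1
      apply Multiset.filter_congr; intro i _; exact ⟨fun h => h.symm, fun h => h.symm⟩
    have e2 : Nat.card {i // LinearMap.ker (mu i) = U}
        = Multiset.card (Multiset.filter (fun i => U = LinearMap.ker (mu i))
            Finset.univ.val) := by
      rw [Nat.card_eq_fintype_card, Fintype.card_subtype]
      simp only [Finset.card, Finset.filter]
      congr 1
      apply Multiset.filter_congr; intro i _; exact ⟨fun h => h.symm, fun h => h.symm⟩
    rw [e1, e2, hc]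
  obtain ⟨π, hπ⟩ := exists_perm (fun i => LinearMap.ker (lam i))
    (fun i => LinearMap.ker (mu i)) hcount
  have hg : ∀ i : Fin m, ∃ g : L ≃ₗ[K] L, ∀ c : C, mu i c = g (lam (π i) c) := by
    intro i
    exact factor (lam (π i)) (mu i) (hπ i)
  choose g hgspec using hg
  refine ⟨π, g, fun c i => ?_⟩
  have := hgspec i c
  simpa [hlam, hmu] using this
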